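/- Let $g_{ki}$ for $k=0,\dots,n$ and $i=1,\dots,p$ be reals with $|g_{ki}|\leq G$ where $G>0$. Then $\sum_{i=1}^{p}\sum_{k=0}^{n}\frac{g_{ki}^2}{\sqrt{G^2+\sum_{j=0}^{k-1}g_{ji}^2}} \leq 2\sum_{i=1}^{p}\sqrt{G^2+\sum_{k=0}^{n-1}g_{ki}^2}$. -/
import Mathlib


open Finset

lemma stmt19_key (n : ℕ) (a : ℕ → ℝ) (G : ℝ) (hG : 0 < G) (ha : ∀ k ≤ n, |a k| ≤ G) :
    ∑ k ∈ range (n + 1), (a k) ^ 2 / Real.sqrt (G ^ 2 + ∑ j ∈ range k, (a j) ^ 2)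
      ≤ 2 * Real.sqrt (G ^ 2 + ∑ k ∈ range n, (a k) ^ 2) := by
  set S : ℕ → ℝ := fun m => ∑ j ∈ range m, (a j) ^ 2 with hS
  have hSnn : ∀ m, 0 ≤ S m := fun m => Finset.sum_nonneg fun j _ => sq_nonneg _
  have step : ∀ k ∈ range (n + 1),
      (a k) ^ 2 / Real.sqrt (G ^ 2 + S k)
        ≤ 2 * (Real.sqrt (S (k + 1)) - Real.sqrt (S k)) := by
    intro k hk
    have hk' : k ≤ n := Nat.lt_succ_iff.mp (mem_range.mp hk)
    have hak : (a k) ^ 2 ≤ G ^ 2 := by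
      have h := ha k hk'
      nlinarith [abs_nonneg (a k), sq_abs (a k)]
    have hSucc : S (k + 1) = S k + (a k) ^ 2 := Finset.sum_range_succ _ _
    set x := Real.sqrt (S k) with hxdef
    set y := Real.sqrt (S (k + 1)) with hydef
    set z := Real.sqrt (G ^ 2 + S k) with hzdef
    have hx2 : x ^ 2 = S k := Real.sq_sqrt (hSnn k)
    have hy2 : y ^ 2 = S (k + 1) := Real.sq_sqrt (hSnn (k + 1))
    have hz2 : z ^ 2 = G ^ 2 + S k := Real.sq_sqrt (by positivity)
    have hxy : x ≤ y := Real.sqrt_le_sqrt (by rw [hSucc]; nlinarith [sq_nonneg (a k)])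
    have hyz : y ≤ z := Real.sqrt_le_sqrt (by rw [hSucc]; linarith)
    have hzpos : 0 < z := Real.sqrt_pos.mpr (by positivity)
    have hxnn : 0 ≤ x := Real.sqrt_nonneg _
    rw [div_le_iff₀ hzpos]
    nlinarith [mul_nonneg (sub_nonneg.mpr hxy) (sub_nonneg.mpr hyz),
      mul_nonneg (sub_nonneg.mpr hxy) (sub_nonneg.mpr (hxy.trans hyz))]
  calc ∑ k ∈ range (n + 1), (a k) ^ 2 / Real.sqrt (G ^ 2 + S k)
      ≤ ∑ k ∈ range (n + 1), 2 * (Real.sqrt (S (k + 1)) - Real.sqrt (S k)) :=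
        Finset.sum_le_sum step
    _ = 2 * (Real.sqrt (S (n + 1)) - Real.sqrt (S 0)) := by
        rw [← Finset.mul_sum, Finset.sum_range_sub (fun m => Real.sqrt (S m))]
    _ = 2 * Real.sqrt (S (n + 1)) := by
        have : S 0 = 0 := by simp [hS]
        rw [this, Real.sqrt_zero, sub_zero]
    _ ≤ 2 * Real.sqrt (G ^ 2 + S n) := by
        have h1 : S (n + 1) ≤ G ^ 2 + S n := by
          simp only [hS]
          rw [Finset.sum_range_succ]
          have h := ha n le_rfl
          nlinarith [abs_nonneg (a n), sq_abs (a n)]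
        have := Real.sqrt_le_sqrt h1
        linarith

theorem stmt19 (p n : ℕ) (g : ℕ → Fin p → ℝ) (G : ℝ) (hG : 0 < G)
    (hg : ∀ k ≤ n, ∀ i, |g k i| ≤ G) :
    ∑ i : Fin p, ∑ k ∈ range (n + 1),
        (g k i) ^ 2 / Real.sqrt (G ^ 2 + ∑ j ∈ range k, (g j i) ^ 2)
      ≤ 2 * ∑ i : Fin p, Real.sqrt (G ^ 2 + ∑ k ∈ range n, (g k i) ^ 2) := by
  rw [Finset.mul_sum]
  exact Finset.sum_le_sum fun i _ =>
    stmt19_key n (fun k => g k i) G hG fun k hk => hg k hk i
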